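/- Let α ∈ (0,1), n ≥ 1, let |·| be a norm on ℂ^n, and let T be a power bounded linear operator on (ℂ^n, |·|). Then ρ_α(T) < ∞ if and only if r(T) < 1. -/

import Mathlib

open scoped ENNReal NNReal

theorem myinv_eq {A : Type*} [Ring A] {x y : A} (h1 : x * y = 1) (h2 : y * x = 1) :
    Ring.inverse x = y :=
  Ring.inverse_unit (⟨x, y, h1, h2⟩ : Aˣ)

theorem myinv_smul {A : Type*} [NormedRing A] [NormedAlgebra ℂ A] (c : ℂ) (hc : c ≠ 0) (b : A)
    (hb : IsUnit b) : Ring.inverse (c • b) = c⁻¹ • Ring.inverse b := by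
  have hb' : b * ↑hb.unit⁻¹ = 1 := by simpa only [hb.unit_spec] using hb.unit.mul_inv
  have hb'' : (↑hb.unit⁻¹ : A) * b = 1 := by simpa only [hb.unit_spec] using hb.unit.inv_mul
  have h1 : (c • b) * (c⁻¹ • (↑hb.unit⁻¹ : A)) = 1 := by
    rw [smul_mul_smul_comm, mul_inv_cancel₀ hc, hb', one_smul]
  have h2 : (c⁻¹ • (↑hb.unit⁻¹ : A)) * (c • b) = 1 := by
    rw [smul_mul_smul_comm, inv_mul_cancel₀ hc, hb'', one_smul]
  rw [myinv_eq hb' hb'', myinv_eq h1 h2]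

/-- For a power bounded operator `T` on `(ℂⁿ, |·|)` and `α ∈ (0,1)`,
the generalized Kreiss condition `ρ_α(T) = sup_{|z|>1} (|z|-1)^α ‖R(z,T)‖ < ∞` holds
if and only if the spectral radius satisfies `r(T) < 1`. -/
theorem kreiss_alpha_finite_iff_spectralRadius_lt_one
    (α : ℝ) (hα : α ∈ Set.Ioo (0:ℝ) 1) (n : ℕ) (hn : 1 ≤ n)
    (E : Type) [NormedAddCommGroup E] [NormedSpace ℂ E]
    (hdim : Module.finrank ℂ E = n)
    (T : E →L[ℂ] E)
    (hpb : ∃ C : ℝ, ∀ k : ℕ, ‖T ^ k‖ ≤ C) :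
    (∃ C : ℝ, ∀ z : ℂ, 1 < ‖z‖ →
        (‖z‖ - 1) ^ α * ‖Ring.inverse (algebraMap ℂ (E →L[ℂ] E) z - T)‖ ≤ C)
      ↔ spectralRadius ℂ T < 1 := by
  obtain ⟨hα0, hα1⟩ := hα
  have hfin : 0 < Module.finrank ℂ E := hdim ▸ hn
  haveI : FiniteDimensional ℂ E := FiniteDimensional.of_finrank_pos hfin
  haveI : Nontrivial E := Module.nontrivial_of_finrank_pos hfin
  haveI : CompleteSpace E := FiniteDimensional.complete ℂ E
  obtain ⟨C0, hC0⟩ := hpb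
  have hC0one : (1:ℝ) ≤ C0 := by simpa using hC0 0
  -- every spectral value has norm ≤ 1
  have hσ : ∀ μ ∈ spectrum ℂ T, ‖μ‖ ≤ 1 := by
    intro μ hμ
    by_contra h
    push_neg at h
    obtain ⟨k, hk⟩ := pow_unbounded_of_one_lt C0 h
    have hmem : μ ^ k ∈ spectrum ℂ (T ^ k) :=
      spectrum.pow_image_subset T k ⟨μ, hμ, rfl⟩
    have := (spectrum.norm_le_norm_of_mem hmem).trans (hC0 k)
    rw [norm_pow] at this
    exact absurd this (not_le.mpr hk)
  constructor
  · rintro ⟨C, hC⟩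
    have hC0' : (0:ℝ) ≤ C := by
      have h2 : (1:ℝ) < ‖(2:ℂ)‖ := by
        rw [Complex.norm_two]; norm_num
      refine le_trans ?_ (hC 2 h2)
      have : (0:ℝ) ≤ ‖(2:ℂ)‖ - 1 := by linarith
      exact mul_nonneg (Real.rpow_nonneg this α) (norm_nonneg _)
    have key : ∀ μ ∈ spectrum ℂ T, ‖μ‖₊ < (1:ℝ≥0) := by
      intro μ hμ
      rw [← NNReal.coe_lt_coe, coe_nnnorm, NNReal.coe_one]
      rcases lt_or_eq_of_le (hσ μ hμ) with h | h
      · exact h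
      exfalso
      set ε : ℝ := ((C+1)⁻¹) ^ ((1:ℝ)/(1-α)) with hεdef
      have hεpos : 0 < ε := Real.rpow_pos_of_pos (by positivity) _
      set z : ℂ := ((1+ε : ℝ) : ℂ) * μ with hzdef
      have hz : ‖z‖ = 1 + ε := by
        rw [hzdef, norm_mul, Complex.norm_real, Real.norm_eq_abs, h,
          abs_of_pos (by linarith), mul_one]
      have hz1 : 1 < ‖z‖ := by rw [hz]; linarith
      have hzs : IsUnit (algebraMap ℂ (E →L[ℂ] E) z - T) := by
        rw [← spectrum.notMem_iff]
        intro hmem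
        have := hσ z hmem
        rw [hz] at this
        linarith
      have hlow : ε⁻¹ ≤ ‖Ring.inverse (algebraMap ℂ (E →L[ℂ] E) z - T)‖ := by
        have hinv : Ring.inverse (algebraMap ℂ (E →L[ℂ] E) z - T) = ↑hzs.unit⁻¹ := by
          have h1 : (algebraMap ℂ (E →L[ℂ] E) z - T) * ↑hzs.unit⁻¹ = 1 := by
            simpa only [hzs.unit_spec] using hzs.unit.mul_inv
          have h2 : (↑hzs.unit⁻¹ : E →L[ℂ] E) * (algebraMap ℂ (E →L[ℂ] E) z - T) = 1 := by
            simpa only [hzs.unit_spec] using hzs.unit.inv_mul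
          exact myinv_eq h1 h2
        rw [hinv]
        by_contra hcon
        push_neg at hcon
        have hupos : 0 < ‖(↑hzs.unit⁻¹ : E →L[ℂ] E)‖ := Units.norm_pos _
        have hεlt : ε < ‖(↑hzs.unit⁻¹ : E →L[ℂ] E)‖⁻¹ := by
          rw [lt_inv_comm₀ hεpos hupos]
          exact hcon
        have hnear : ‖(algebraMap ℂ (E →L[ℂ] E) μ - T) - ↑hzs.unit‖
            < ‖(↑hzs.unit⁻¹ : E →L[ℂ] E)‖⁻¹ := by
          rw [hzs.unit_spec]
          have : (algebraMap ℂ (E →L[ℂ] E) μ - T) - (algebraMap ℂ (E →L[ℂ] E) z - T)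
              = algebraMap ℂ (E →L[ℂ] E) (μ - z) := by
            rw [map_sub]; abel
          rw [this, norm_algebraMap']
          have : μ - z = -((ε:ℂ) * μ) := by rw [hzdef]; push_cast; ring
          rw [this, norm_neg, norm_mul, h, mul_one, Complex.norm_real,
            Real.norm_eq_abs, abs_of_pos hεpos]
          exact hεlt
        exact spectrum.mem_iff.mp hμ
          (Units.ofNearby hzs.unit (algebraMap ℂ (E →L[ℂ] E) μ - T) hnear).isUnit
      have hmain := hC z hz1
      rw [hz, add_sub_cancel_left] at hmain
      have h1 : ε ^ α * ε⁻¹ ≤ C := by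
        calc ε ^ α * ε⁻¹ ≤ ε ^ α * ‖Ring.inverse (algebraMap ℂ (E →L[ℂ] E) z - T)‖ := by
              exact mul_le_mul_of_nonneg_left hlow (Real.rpow_nonneg hεpos.le α)
          _ ≤ C := hmain
      have h2 : ε ^ α * ε⁻¹ = C + 1 := by
        rw [← Real.rpow_neg_one ε, ← Real.rpow_add hεpos, hεdef,
          ← Real.rpow_mul (by positivity)]
        have h1α : (1:ℝ) - α ≠ 0 := by linarith
        have hexp : (1:ℝ)/(1-α) * (α + -1) = -1 := by
          rw [one_div, inv_mul_eq_div, div_eq_iff h1α]; ring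
        rw [hexp, Real.rpow_neg_one, inv_inv]
      linarith
    calc spectralRadius ℂ T < ((1:ℝ≥0) : ℝ≥0∞) := spectrum.spectralRadius_lt_of_forall_lt T key
      _ = 1 := by norm_num
  · intro hr
    -- find N with ‖T^N‖ < 1
    obtain ⟨N, hN1, hNlt⟩ : ∃ N : ℕ, 1 ≤ N ∧ ‖T ^ N‖ < 1 := by
      have hgel := spectrum.pow_nnnorm_pow_one_div_tendsto_nhds_spectralRadius T
      have hev : ∀ᶠ k : ℕ in Filter.atTop,
          (‖T ^ k‖₊ : ℝ≥0∞) ^ (1/(k:ℝ)) < 1 := hgel.eventually_lt_const hr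
      obtain ⟨N, hN1, hNlt⟩ := ((Filter.eventually_ge_atTop 1).and hev).exists
      refine ⟨N, hN1, ?_⟩
      by_contra hcon
      push_neg at hcon
      have h1 : (1:ℝ≥0) ≤ ‖T ^ N‖₊ := by rwa [← NNReal.coe_le_coe, NNReal.coe_one, coe_nnnorm]
      have h2 : (1:ℝ≥0∞) ≤ (‖T ^ N‖₊ : ℝ≥0∞) ^ (1/(N:ℝ)) := by
        have hpos : (0:ℝ) ≤ 1/(N:ℝ) := by positivity
        calc (1:ℝ≥0∞) = (1:ℝ≥0∞) ^ (1/(N:ℝ)) := (ENNReal.one_rpow _).symm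
          _ ≤ (‖T ^ N‖₊ : ℝ≥0∞) ^ (1/(N:ℝ)) := by
            exact ENNReal.rpow_le_rpow (by exact_mod_cast h1) hpos
      exact absurd hNlt (not_lt.mpr h2)
    have hTN : 0 < 1 - ‖T ^ N‖ := by linarith
    refine ⟨(N:ℝ) * C0 * (1 - ‖T ^ N‖)⁻¹, ?_⟩
    intro z hz
    set s : ℝ := ‖z‖ with hsdef
    have hs1 : 1 < s := hz
    have hs0 : 0 < s := by linarith
    have hz0 : z ≠ 0 := by
      intro h0
      rw [hsdef, h0, norm_zero] at hs1
      linarith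
    have hzN0 : z ^ N ≠ 0 := pow_ne_zero _ hz0
    set a : E →L[ℂ] E := algebraMap ℂ (E →L[ℂ] E) z with hadef
    have hc : Commute a T := Algebra.commutes z T
    set G : E →L[ℂ] E := ∑ i ∈ Finset.range N, a ^ i * T ^ (N - 1 - i) with hGdef
    have hGx : G * (a - T) = a ^ N - T ^ N := hc.geom_sum₂_mul N
    have hxG : (a - T) * G = a ^ N - T ^ N := hc.mul_geom_sum₂ N
    set w : E →L[ℂ] E := a ^ N - T ^ N with hwdef
    have haN : a ^ N = algebraMap ℂ (E →L[ℂ] E) (z ^ N) := by rw [hadef, ← map_pow]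
    have hsN : ‖(z:ℂ) ^ N‖ = s ^ N := by rw [norm_pow]
    have hsN1 : (1:ℝ) ≤ s ^ N := one_le_pow₀ hs1.le
    have hwu : IsUnit w := by
      rw [hwdef, haN, ← spectrum.notMem_iff]
      intro hmem
      have h1 := spectrum.norm_le_norm_of_mem hmem
      rw [hsN] at h1
      linarith
    have ht1' : ‖(z ^ N)⁻¹ • (T ^ N)‖ ≤ ‖T ^ N‖ := by
      rw [norm_smul ((z ^ N)⁻¹) (T ^ N), norm_inv, hsN]
      have hinv1 : (s ^ N)⁻¹ ≤ 1 := inv_le_one_of_one_le₀ hsN1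
      exact mul_le_of_le_one_left (norm_nonneg _) hinv1
    have ht1 : ‖(z ^ N)⁻¹ • (T ^ N)‖ < 1 := lt_of_le_of_lt ht1' hNlt
    have hwdec : w = (z ^ N) • ((1 : E →L[ℂ] E) - (z ^ N)⁻¹ • (T ^ N)) := by
      rw [smul_sub, smul_smul, mul_inv_cancel₀ hzN0, one_smul, hwdef, haN,
        Algebra.algebraMap_eq_smul_one]
    have hone : IsUnit ((1 : E →L[ℂ] E) - (z ^ N)⁻¹ • (T ^ N)) :=
      isUnit_one_sub_of_norm_lt_one ht1
    have hinvw : Ring.inverse w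
        = (z ^ N)⁻¹ • Ring.inverse ((1 : E →L[ℂ] E) - (z ^ N)⁻¹ • (T ^ N)) := by
      rw [hwdec, myinv_smul _ hzN0 _ hone]
    have hinvw_norm : ‖Ring.inverse w‖ ≤ (s ^ N)⁻¹ * (1 - ‖T ^ N‖)⁻¹ := by
      rw [hinvw, norm_smul ((z ^ N)⁻¹) (Ring.inverse ((1 : E →L[ℂ] E) - (z ^ N)⁻¹ • (T ^ N))), norm_inv, hsN]
      have hb : ‖Ring.inverse ((1 : E →L[ℂ] E) - (z ^ N)⁻¹ • (T ^ N))‖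
          ≤ (1 - ‖T ^ N‖)⁻¹ := by
        rw [← geom_series_eq_inverse _ ht1]
        refine (tsum_geometric_le_of_norm_lt_one _ ht1).trans ?_
        rw [norm_one]
        have h1 : (1 - ‖(z ^ N)⁻¹ • (T ^ N)‖)⁻¹ ≤ (1 - ‖T ^ N‖)⁻¹ := by
          apply inv_anti₀ hTN
          linarith
        linarith
      exact mul_le_mul_of_nonneg_left hb (by positivity)
    -- commutation facts and inverse of a - T
    have hxw : (a - T) * w = w * (a - T) := by
      calc (a - T) * w = (a - T) * (G * (a - T)) := by rw [hGx]
        _ = ((a - T) * G) * (a - T) := by rw [mul_assoc]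
        _ = w * (a - T) := by rw [hxG]
    have huw : (↑hwu.unit : E →L[ℂ] E) = w := hwu.unit_spec
    have hxu : Commute (a - T) (↑hwu.unit : E →L[ℂ] E) := by rw [huw]; exact hxw
    have hxuinv := hxu.units_inv_right
    have h1 : (a - T) * (G * ↑hwu.unit⁻¹) = 1 := by
      rw [← mul_assoc, hxG]
      simpa only [huw] using hwu.unit.mul_inv
    have h2 : (G * ↑hwu.unit⁻¹) * (a - T) = 1 := by
      rw [mul_assoc, ← hxuinv.eq, ← mul_assoc, hGx]
      simpa only [huw] using hwu.unit.mul_inv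
    have hinvx : Ring.inverse (a - T) = G * ↑hwu.unit⁻¹ := myinv_eq h1 h2
    have huinv_eq : (↑hwu.unit⁻¹ : E →L[ℂ] E) = Ring.inverse w := by
      have hw1 : w * ↑hwu.unit⁻¹ = 1 := by
        simpa only [huw] using hwu.unit.mul_inv
      have hw2 : (↑hwu.unit⁻¹ : E →L[ℂ] E) * w = 1 := by
        simpa only [huw] using hwu.unit.inv_mul
      rw [myinv_eq hw1 hw2]
    have hGnorm : ‖G‖ ≤ (N:ℝ) * (C0 * s ^ (N-1)) := by
      rw [hGdef]
      refine (norm_sum_le _ _).trans ?_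
      have hbound : ∀ i ∈ Finset.range N, ‖a ^ i * T ^ (N-1-i)‖ ≤ C0 * s ^ (N-1) := by
        intro i hi
        refine (norm_mul_le _ _).trans ?_
        have hi' : i ≤ N - 1 := by
          have := Finset.mem_range.mp hi; omega
        have h1 : ‖a ^ i‖ = s ^ i := by
          rw [hadef, ← map_pow, norm_algebraMap', norm_pow]
        rw [h1]
        have h2 : s ^ i ≤ s ^ (N-1) := pow_le_pow_right₀ hs1.le hi'
        have h3 : ‖T ^ (N-1-i)‖ ≤ C0 := hC0 _
        calc s ^ i * ‖T ^ (N-1-i)‖ ≤ s ^ (N-1) * C0 :=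
              mul_le_mul h2 h3 (norm_nonneg _) (by positivity)
          _ = C0 * s ^ (N-1) := mul_comm _ _
      calc ∑ i ∈ Finset.range N, ‖a ^ i * T ^ (N-1-i)‖
          ≤ ∑ _i ∈ Finset.range N, (C0 * s ^ (N-1)) := Finset.sum_le_sum hbound
        _ = (N:ℝ) * (C0 * s ^ (N-1)) := by
            rw [Finset.sum_const, Finset.card_range, nsmul_eq_mul]
    have hsne : s ≠ 0 := ne_of_gt hs0
    have hfinal : ‖Ring.inverse (algebraMap ℂ (E →L[ℂ] E) z - T)‖
        ≤ (N:ℝ) * C0 * (1 - ‖T ^ N‖)⁻¹ / s := by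
      have : algebraMap ℂ (E →L[ℂ] E) z - T = a - T := by rw [hadef]
      rw [this, hinvx]
      refine (norm_mul_le _ _).trans ?_
      rw [huinv_eq]
      calc ‖G‖ * ‖Ring.inverse w‖
          ≤ ((N:ℝ) * (C0 * s ^ (N-1))) * ((s ^ N)⁻¹ * (1 - ‖T ^ N‖)⁻¹) :=
            mul_le_mul hGnorm hinvw_norm (norm_nonneg _) (by positivity)
        _ = (N:ℝ) * C0 * (1 - ‖T ^ N‖)⁻¹ / s := by
            have hN' : N - 1 + 1 = N := by omega
            have hsplit : s ^ N = s ^ (N-1) * s := by rw [← pow_succ, hN']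
            have hpne : s ^ (N-1) ≠ 0 := pow_ne_zero _ hsne
            rw [hsplit]
            field_simp
    have hrpow : (s - 1) ^ α ≤ s := by
      rcases le_total (s - 1) 1 with hle | hge
      · have h1 : (s - 1) ^ α ≤ 1 := Real.rpow_le_one (by linarith) hle hα0.le
        linarith
      · calc (s - 1) ^ α ≤ (s - 1) ^ (1:ℝ) :=
              Real.rpow_le_rpow_of_exponent_le hge hα1.le
          _ = s - 1 := Real.rpow_one _
          _ ≤ s := by linarith
    calc (s - 1) ^ α * ‖Ring.inverse (algebraMap ℂ (E →L[ℂ] E) z - T)‖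
        ≤ s * ((N:ℝ) * C0 * (1 - ‖T ^ N‖)⁻¹ / s) :=
          mul_le_mul hrpow hfinal (norm_nonneg _) hs0.le
      _ = (N:ℝ) * C0 * (1 - ‖T ^ N‖)⁻¹ := by
          field_simp
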